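/- Let H be the group of order 243 presented by generators η₁, η₂, η₃, z₁₂, z₂₃ with relations η₁³ = η₂³ = η₃³ = z₁₂³ = z₂₃³ = 1, z₁₂ and z₂₃ central, η₂η₁ = z₁₂⁻¹η₁η₂, η₃η₁η₃⁻¹ = z₁₂η₁η₂², η₃η₂η₃⁻¹ = z₂₃²η₂. Let A = ⟨z₁₂, z₂₃⟩ ≅ C₃ × C₃. Then A ⊆ Z(H) ∩ [H,H] and H/A is isomorphic to the Heisenberg group over ℤ/3ℤ (i.e., H is an efficient central extension of the nonabelian group of order 27 and exponent 3 by C₃ × C₃). -/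

import Mathlib

/-- The Heisenberg group over a commutative ring `R`: triples `(x, y, z)`
corresponding to the upper unitriangular matrices `![![1, x, z], ![0, 1, y], ![0, 0, 1]]`,
with multiplication given by matrix multiplication. -/
@[ext]
structure Heisenberg (R : Type*) [CommRing R] where
  x : R
  y : R
  z : R

namespace Heisenberg

variable {R : Type*} [CommRing R]

instance : Mul (Heisenberg R) :=
  ⟨fun a b => ⟨a.x + b.x, a.y + b.y, a.z + b.z + a.x * b.y⟩⟩

instance : One (Heisenberg R) := ⟨⟨0, 0, 0⟩⟩

instance : Inv (Heisenberg R) := ⟨fun a => ⟨-a.x, -a.y, a.x * a.y - a.z⟩⟩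

@[simp] theorem mul_x (a b : Heisenberg R) : (a * b).x = a.x + b.x := rfl
@[simp] theorem mul_y (a b : Heisenberg R) : (a * b).y = a.y + b.y := rfl
@[simp] theorem mul_z (a b : Heisenberg R) : (a * b).z = a.z + b.z + a.x * b.y := rfl
@[simp] theorem one_x : (1 : Heisenberg R).x = 0 := rfl
@[simp] theorem one_y : (1 : Heisenberg R).y = 0 := rfl
@[simp] theorem one_z : (1 : Heisenberg R).z = 0 := rfl
@[simp] theorem inv_x (a : Heisenberg R) : a⁻¹.x = -a.x := rfl
@[simp] theorem inv_y (a : Heisenberg R) : a⁻¹.y = -a.y := rfl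
@[simp] theorem inv_z (a : Heisenberg R) : a⁻¹.z = a.x * a.y - a.z := rfl

instance instGroup : Group (Heisenberg R) where
  mul_assoc a b c := by ext <;> simp <;> ring
  one_mul a := by ext <;> simp
  mul_one a := by ext <;> simp
  inv_mul_cancel a := by ext <;> simp

/-- The triple `(x,y,z)` corresponds to the matrix `![![1,x,z],![0,1,y],![0,0,1]]`,
and multiplication is matrix multiplication (in the `(x, y, z)` coordinates). -/
theorem mul_def (a b : Heisenberg R) :
    a * b = ⟨a.x + b.x, a.y + b.y, a.z + b.z + a.x * b.y⟩ := rfl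

end Heisenberg

namespace Stmt18

private def rη₁ : FreeGroup (Fin 5) := FreeGroup.of 0
private def rη₂ : FreeGroup (Fin 5) := FreeGroup.of 1
private def rη₃ : FreeGroup (Fin 5) := FreeGroup.of 2
private def rz₁₂ : FreeGroup (Fin 5) := FreeGroup.of 3
private def rz₂₃ : FreeGroup (Fin 5) := FreeGroup.of 4

/-- Relators: `η₁³ = η₂³ = η₃³ = z₁₂³ = z₂₃³ = 1`, `z₁₂, z₂₃` central,
`η₂η₁ = z₁₂⁻¹η₁η₂`, `η₃η₁η₃⁻¹ = z₁₂η₁η₂²`, `η₃η₂η₃⁻¹ = z₂₃²η₂`. -/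
def rels : Set (FreeGroup (Fin 5)) :=
  {rη₁ ^ 3, rη₂ ^ 3, rη₃ ^ 3, rz₁₂ ^ 3, rz₂₃ ^ 3,
   rz₁₂ * rη₁ * rz₁₂⁻¹ * rη₁⁻¹, rz₁₂ * rη₂ * rz₁₂⁻¹ * rη₂⁻¹,
   rz₁₂ * rη₃ * rz₁₂⁻¹ * rη₃⁻¹, rz₁₂ * rz₂₃ * rz₁₂⁻¹ * rz₂₃⁻¹,
   rz₂₃ * rη₁ * rz₂₃⁻¹ * rη₁⁻¹, rz₂₃ * rη₂ * rz₂₃⁻¹ * rη₂⁻¹,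
   rz₂₃ * rη₃ * rz₂₃⁻¹ * rη₃⁻¹,
   rη₂ * rη₁ * (rz₁₂⁻¹ * rη₁ * rη₂)⁻¹,
   rη₃ * rη₁ * rη₃⁻¹ * (rz₁₂ * rη₁ * rη₂ ^ 2)⁻¹,
   rη₃ * rη₂ * rη₃⁻¹ * (rz₂₃ ^ 2 * rη₂)⁻¹}

/-- The presented group `H` of order 243. -/
abbrev H := PresentedGroup rels

def η₂ : H := PresentedGroup.of 1
def z₁₂ : H := PresentedGroup.of 3
def z₂₃ : H := PresentedGroup.of 4

abbrev C3 := Multiplicative (ZMod 3)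

/-- The central subgroup `A = ⟨z₁₂, z₂₃⟩`. -/
def A : Subgroup H := Subgroup.closure {z₁₂, z₂₃}

-- auxiliary machinery

private def η₁ : H := PresentedGroup.of 0
private def η₃ : H := PresentedGroup.of 2

private lemma relOne {r : FreeGroup (Fin 5)} (h : r ∈ rels) : PresentedGroup.mk rels r = 1 :=
  (QuotientGroup.eq_one_iff _).2 (Subgroup.subset_normalClosure h)

private lemma commOf {a b : Fin 5}
    (h : FreeGroup.of a * FreeGroup.of b * (FreeGroup.of a)⁻¹ * (FreeGroup.of b)⁻¹ ∈ rels) :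
    Commute (PresentedGroup.of (rels := rels) a) (PresentedGroup.of b) := by
  have h1 := relOne h
  simp only [map_mul, map_inv] at h1
  rw [mul_inv_eq_one, mul_inv_eq_iff_eq_mul] at h1
  exact h1

private lemma pow3Of {a : Fin 5} (h : FreeGroup.of a ^ 3 ∈ rels) :
    (PresentedGroup.of (rels := rels) a) ^ 3 = 1 := by
  have h1 := relOne h
  rwa [map_pow] at h1

private lemma hη₁3 : η₁ ^ 3 = 1 := pow3Of (by simp [rels, rη₁])
private lemma hη₂3 : η₂ ^ 3 = 1 := pow3Of (by simp [rels, rη₂])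
private lemma hη₃3 : η₃ ^ 3 = 1 := pow3Of (by simp [rels, rη₃])
private lemma hz₁₂3 : z₁₂ ^ 3 = 1 := pow3Of (by simp [rels, rz₁₂])
private lemma hz₂₃3 : z₂₃ ^ 3 = 1 := pow3Of (by simp [rels, rz₂₃])

private lemma c_z12_η₁ : Commute z₁₂ η₁ := commOf (by simp [rels, rz₁₂, rη₁])
private lemma c_z12_η₂ : Commute z₁₂ η₂ := commOf (by simp [rels, rz₁₂, rη₂])
private lemma c_z12_η₃ : Commute z₁₂ η₃ := commOf (by simp [rels, rz₁₂, rη₃])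
private lemma c_z12_z23 : Commute z₁₂ z₂₃ := commOf (by simp [rels, rz₁₂, rz₂₃])
private lemma c_z23_η₁ : Commute z₂₃ η₁ := commOf (by simp [rels, rz₂₃, rη₁])
private lemma c_z23_η₂ : Commute z₂₃ η₂ := commOf (by simp [rels, rz₂₃, rη₂])
private lemma c_z23_η₃ : Commute z₂₃ η₃ := commOf (by simp [rels, rz₂₃, rη₃])

private lemma rel13 : η₂ * η₁ = z₁₂⁻¹ * η₁ * η₂ := by
  have h1 := relOne (show rη₂ * rη₁ * (rz₁₂⁻¹ * rη₁ * rη₂)⁻¹ ∈ rels by simp [rels])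
  simp only [map_mul, map_inv] at h1
  rw [mul_inv_eq_one] at h1
  exact h1

private lemma rel14 : η₃ * η₁ * η₃⁻¹ = z₁₂ * η₁ * η₂ ^ 2 := by
  have h1 := relOne (show rη₃ * rη₁ * rη₃⁻¹ * (rz₁₂ * rη₁ * rη₂ ^ 2)⁻¹ ∈ rels by simp [rels])
  simp only [map_mul, map_inv, map_pow] at h1
  rw [mul_inv_eq_one] at h1
  exact h1

private lemma rel15 : η₃ * η₂ * η₃⁻¹ = z₂₃ ^ 2 * η₂ := by
  have h1 := relOne (show rη₃ * rη₂ * rη₃⁻¹ * (rz₂₃ ^ 2 * rη₂)⁻¹ ∈ rels by simp [rels])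
  simp only [map_mul, map_inv, map_pow] at h1
  rw [mul_inv_eq_one] at h1
  exact h1

-- z₁₂ and z₂₃ are central
private lemma z₁₂_mem_center : z₁₂ ∈ Subgroup.center H := by
  rw [Subgroup.mem_center_iff]
  intro g
  have hg : g ∈ Subgroup.centralizer {z₁₂} := by
    refine PresentedGroup.generated_by rels _ (fun j => ?_) g
    rw [Subgroup.mem_centralizer_iff]
    intro h hh
    rw [Set.mem_singleton_iff] at hh
    subst hh
    fin_cases j
    · exact c_z12_η₁
    · exact c_z12_η₂
    · exact c_z12_η₃
    · rfl
    · exact c_z12_z23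
  exact (Subgroup.mem_centralizer_iff.1 hg z₁₂ rfl).symm

private lemma z₂₃_mem_center : z₂₃ ∈ Subgroup.center H := by
  rw [Subgroup.mem_center_iff]
  intro g
  have hg : g ∈ Subgroup.centralizer {z₂₃} := by
    refine PresentedGroup.generated_by rels _ (fun j => ?_) g
    rw [Subgroup.mem_centralizer_iff]
    intro h hh
    rw [Set.mem_singleton_iff] at hh
    subst hh
    fin_cases j
    · exact c_z23_η₁
    · exact c_z23_η₂
    · exact c_z23_η₃
    · exact c_z12_z23.symm
    · rfl
  exact (Subgroup.mem_centralizer_iff.1 hg z₂₃ rfl).symm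

open scoped commutatorElement

private lemma z₁₂_mem_commutator : z₁₂ ∈ commutator H := by
  have h : z₁₂ * (η₂ * η₁) = η₁ * η₂ := by rw [rel13]; group
  have h2 : z₁₂ = ⁅η₁, η₂⁆ := by
    rw [commutatorElement_def, ← h]; group
  rw [h2, commutator_def]
  exact Subgroup.commutator_mem_commutator (Subgroup.mem_top _) (Subgroup.mem_top _)

private lemma z₂₃_mem_commutator : z₂₃ ∈ commutator H := by
  have h2 : z₂₃ ^ 2 = ⁅η₃, η₂⁆ := by
    rw [commutatorElement_def, rel15]; group
  have hmem : z₂₃ ^ 2 ∈ commutator H := by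
    rw [h2, commutator_def]
    exact Subgroup.commutator_mem_commutator (Subgroup.mem_top _) (Subgroup.mem_top _)
  have h4 : z₂₃ ^ (2 + 2) = z₂₃ := by
    rw [pow_eq_pow_mod (2 + 2) hz₂₃3]; norm_num
  rw [← h4, pow_add]
  exact mul_mem hmem hmem



/-- Explicit model group of order 243. -/
@[ext] structure Md where
  a : ZMod 3
  b : ZMod 3
  c : ZMod 3
  d : ZMod 3
  e : ZMod 3
deriving DecidableEq

namespace Md

instance : Mul Md :=
  ⟨fun x y => ⟨x.a + y.a, x.b + y.b - x.c * y.a, x.c + y.c,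
    x.d + y.d + 2 * x.c * (y.a + y.a ^ 2) - y.a * x.b,
    x.e + y.e - x.c * y.b + y.a * x.c - y.a * x.c ^ 2⟩⟩

instance : One Md := ⟨⟨0, 0, 0, 0, 0⟩⟩

instance : Inv Md :=
  ⟨fun x => ⟨-x.a, -x.b - x.c * x.a, -x.c,
    -x.d + 2 * x.c * (x.a + x.a ^ 2) - x.a * x.b - x.c * x.a ^ 2,
    -x.e - x.c * x.b + x.a * x.c + x.a * x.c ^ 2⟩⟩

@[simp] theorem mul_a (x y : Md) : (x * y).a = x.a + y.a := rfl
@[simp] theorem mul_b (x y : Md) : (x * y).b = x.b + y.b - x.c * y.a := rfl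
@[simp] theorem mul_c (x y : Md) : (x * y).c = x.c + y.c := rfl
@[simp] theorem mul_d (x y : Md) :
    (x * y).d = x.d + y.d + 2 * x.c * (y.a + y.a ^ 2) - y.a * x.b := rfl
@[simp] theorem mul_e (x y : Md) :
    (x * y).e = x.e + y.e - x.c * y.b + y.a * x.c - y.a * x.c ^ 2 := rfl
@[simp] theorem one_a : (1 : Md).a = 0 := rfl
@[simp] theorem one_b : (1 : Md).b = 0 := rfl
@[simp] theorem one_c : (1 : Md).c = 0 := rfl
@[simp] theorem one_d : (1 : Md).d = 0 := rfl
@[simp] theorem one_e : (1 : Md).e = 0 := rfl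
@[simp] theorem inv_a (x : Md) : x⁻¹.a = -x.a := rfl
@[simp] theorem inv_b (x : Md) : x⁻¹.b = -x.b - x.c * x.a := rfl
@[simp] theorem inv_c (x : Md) : x⁻¹.c = -x.c := rfl
@[simp] theorem inv_d (x : Md) :
    x⁻¹.d = -x.d + 2 * x.c * (x.a + x.a ^ 2) - x.a * x.b - x.c * x.a ^ 2 := rfl
@[simp] theorem inv_e (x : Md) : x⁻¹.e = -x.e - x.c * x.b + x.a * x.c + x.a * x.c ^ 2 := rfl

private lemma three_eq_zero : (3 : ZMod 3) = 0 := rfl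

instance instGroup : Group Md where
  mul_assoc x y z := by
    ext
    · simp only [mul_a]; ring
    · simp only [mul_a, mul_b, mul_c]; ring
    · simp only [mul_c]; ring
    · simp only [mul_a, mul_b, mul_c, mul_d]
      linear_combination (-(x.c * y.a * z.a)) * three_eq_zero
    · simp only [mul_a, mul_b, mul_c, mul_e]
      linear_combination (-(z.a * x.c * y.c)) * three_eq_zero
  one_mul x := by ext <;> simp
  mul_one x := by ext <;> simp
  inv_mul_cancel x := by
    ext <;> simp <;> ring

end Md


-- generators of the model
private def E1 : Md := ⟨1, 0, 0, 0, 0⟩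
private def E2 : Md := ⟨0, 1, 0, 0, 0⟩
private def E3 : Md := ⟨0, 0, 1, 0, 0⟩
private def Zc : Md := ⟨0, 0, 0, 1, 0⟩
private def Wc : Md := ⟨0, 0, 0, 0, 1⟩

private def fMd : Fin 5 → Md
  | 0 => E1
  | 1 => E2
  | 2 => E3
  | 3 => Zc
  | 4 => Wc

private lemma hrelsMd : ∀ r ∈ rels, FreeGroup.lift fMd r = 1 := by
  intro r hr
  simp only [rels, Set.mem_insert_iff, Set.mem_singleton_iff] at hr
  rcases hr with rfl|rfl|rfl|rfl|rfl|rfl|rfl|rfl|rfl|rfl|rfl|rfl|rfl|rfl|rfl <;>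
    simp only [rη₁, rη₂, rη₃, rz₁₂, rz₂₃, map_mul, map_inv, map_pow, FreeGroup.lift_apply_of, fMd] <;>
    decide

private def φ : H →* Md := PresentedGroup.toGroup hrelsMd

private lemma φ_z₁₂ : φ z₁₂ = Zc := PresentedGroup.toGroup.of hrelsMd
private lemma φ_z₂₃ : φ z₂₃ = Wc := PresentedGroup.toGroup.of hrelsMd

-- the homomorphism C3 × C3 →* H hitting A
private lemma zz_mul (i j k l : ℕ) :
    (z₁₂ ^ i * z₂₃ ^ j) * (z₁₂ ^ k * z₂₃ ^ l) = z₁₂ ^ (i + k) * z₂₃ ^ (j + l) := by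
  have h := (c_z12_z23.pow_pow k j).eq.symm
  rw [pow_add, pow_add, mul_assoc, ← mul_assoc (z₂₃ ^ j), h]
  simp [mul_assoc]

private def θ : C3 × C3 →* H :=
  MonoidHom.mk' (fun p => z₁₂ ^ (Multiplicative.toAdd p.1).val * z₂₃ ^ (Multiplicative.toAdd p.2).val)
    (by
      intro p q
      simp only [Prod.fst_mul, Prod.snd_mul, toAdd_mul]
      rw [ZMod.val_add, ZMod.val_add, ← pow_eq_pow_mod _ hz₁₂3, ← pow_eq_pow_mod _ hz₂₃3]
      exact (zz_mul _ _ _ _).symm)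

private lemma θ_apply (p : C3 × C3) :
    θ p = z₁₂ ^ (Multiplicative.toAdd p.1).val * z₂₃ ^ (Multiplicative.toAdd p.2).val := rfl

private lemma hMdKer : ∀ x y : ZMod 3, Zc ^ x.val * Wc ^ y.val = 1 → x = 0 ∧ y = 0 := by
  decide

private lemma θ_injective : Function.Injective θ := by
  refine (injective_iff_map_eq_one θ).2 (fun p hp => ?_)
  have hφ := congrArg φ hp
  rw [map_one, θ_apply, map_mul, map_pow, map_pow, φ_z₁₂, φ_z₂₃] at hφ
  obtain ⟨h1, h2⟩ := hMdKer _ _ hφ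
  have : p = (Multiplicative.ofAdd (Multiplicative.toAdd p.1),
      Multiplicative.ofAdd (Multiplicative.toAdd p.2)) := rfl
  rw [this, h1, h2]
  rfl

private lemma z₁₂_mem_A : z₁₂ ∈ A := Subgroup.subset_closure (Set.mem_insert _ _)
private lemma z₂₃_mem_A : z₂₃ ∈ A := Subgroup.subset_closure (Set.mem_insert_of_mem _ rfl)

private lemma θ_range : θ.range = A := by
  apply le_antisymm
  · intro x hx
    rw [MonoidHom.mem_range] at hx
    obtain ⟨p, hp⟩ := hx
    rw [← hp, θ_apply]
    exact mul_mem (pow_mem z₁₂_mem_A _) (pow_mem z₂₃_mem_A _)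
  · rw [A]
    refine (Subgroup.closure_le _).2 ?_
    rintro x hx
    simp only [Set.mem_insert_iff, Set.mem_singleton_iff] at hx
    rcases hx with rfl | rfl
    · exact ⟨(Multiplicative.ofAdd 1, 1), by simp [θ_apply, ZMod.val_one]⟩
    · exact ⟨(1, Multiplicative.ofAdd 1), by simp [θ_apply, ZMod.val_one]⟩

private noncomputable def equivA : A ≃* C3 × C3 :=
  ((MonoidHom.ofInjective θ_injective).trans (MulEquiv.subgroupCongr θ_range)).symm

private lemma A_le_center_inf_commutator : A ≤ Subgroup.center H ⊓ commutator H := by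
  rw [A]
  refine (Subgroup.closure_le _).2 ?_
  rintro x hx
  simp only [Set.mem_insert_iff, Set.mem_singleton_iff] at hx
  rcases hx with rfl | rfl
  · exact Subgroup.mem_inf.2 ⟨z₁₂_mem_center, z₁₂_mem_commutator⟩
  · exact Subgroup.mem_inf.2 ⟨z₂₃_mem_center, z₂₃_mem_commutator⟩

private lemma A_normal : A.Normal := by
  constructor
  intro a ha g
  have hc := Subgroup.mem_center_iff.1 (Subgroup.mem_inf.1 (A_le_center_inf_commutator ha)).1 g
  rw [hc, mul_inv_cancel_right]
  exact ha

private lemma ncl_eq_A : Subgroup.normalClosure {z₁₂, z₂₃} = A := by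
  haveI := A_normal
  refine le_antisymm (Subgroup.normalClosure_le_normal ?_)
    ((Subgroup.closure_le _).2 Subgroup.subset_normalClosure)
  rintro x hx
  simp only [Set.mem_insert_iff, Set.mem_singleton_iff] at hx
  rcases hx with rfl | rfl
  · exact z₁₂_mem_A
  · exact z₂₃_mem_A

-- ### Part 4 : the quotient is the Heisenberg group
private abbrev N0 : Subgroup H := Subgroup.normalClosure {z₁₂, z₂₃}

private instance : DecidableEq (Heisenberg (ZMod 3)) := fun u v =>
  decidable_of_iff (u.x = v.x ∧ u.y = v.y ∧ u.z = v.z)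
    ⟨fun ⟨h1, h2, h3⟩ => Heisenberg.ext h1 h2 h3, fun h => by subst h; exact ⟨rfl, rfl, rfl⟩⟩

private def Xh : Heisenberg (ZMod 3) := ⟨1, 0, 0⟩
private def Yh : Heisenberg (ZMod 3) := ⟨0, 1, 0⟩
private def Zh : Heisenberg (ZMod 3) := ⟨0, 0, 2⟩

private def fHe : Fin 5 → Heisenberg (ZMod 3)
  | 0 => Yh
  | 1 => Zh
  | 2 => Xh
  | 3 => 1
  | 4 => 1

private lemma hrelsHe : ∀ r ∈ rels, FreeGroup.lift fHe r = 1 := by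
  intro r hr
  simp only [rels, Set.mem_insert_iff, Set.mem_singleton_iff] at hr
  rcases hr with rfl|rfl|rfl|rfl|rfl|rfl|rfl|rfl|rfl|rfl|rfl|rfl|rfl|rfl|rfl <;>
    simp only [rη₁, rη₂, rη₃, rz₁₂, rz₂₃, map_mul, map_inv, map_pow, FreeGroup.lift_apply_of, fHe] <;>
    decide

private def q : H →* Heisenberg (ZMod 3) := PresentedGroup.toGroup hrelsHe

private lemma hNker : N0 ≤ q.ker := by
  refine Subgroup.normalClosure_le_normal ?_
  rintro x hx
  simp only [Set.mem_insert_iff, Set.mem_singleton_iff] at hx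
  rcases hx with rfl | rfl
  · exact MonoidHom.mem_ker.2 (PresentedGroup.toGroup.of hrelsHe)
  · exact MonoidHom.mem_ker.2 (PresentedGroup.toGroup.of hrelsHe)

private noncomputable def qbar : (H ⧸ N0) →* Heisenberg (ZMod 3) :=
  QuotientGroup.lift N0 q hNker

private def πh : H →* H ⧸ N0 := QuotientGroup.mk' N0

private def v1 : H ⧸ N0 := πh η₁
private def v2 : H ⧸ N0 := πh η₂
private def v3 : H ⧸ N0 := πh η₃

private lemma πz₁₂ : πh z₁₂ = 1 :=
  (QuotientGroup.eq_one_iff _).2 (Subgroup.subset_normalClosure (Set.mem_insert _ _))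
private lemma πz₂₃ : πh z₂₃ = 1 :=
  (QuotientGroup.eq_one_iff _).2 (Subgroup.subset_normalClosure (Set.mem_insert_of_mem _ rfl))

private lemma n1 : v1 ^ 3 = 1 := by rw [v1, ← map_pow, hη₁3, map_one]
private lemma n2 : v2 ^ 3 = 1 := by rw [v2, ← map_pow, hη₂3, map_one]
private lemma n3 : v3 ^ 3 = 1 := by rw [v3, ← map_pow, hη₃3, map_one]

private lemma c21 : Commute v2 v1 := by
  have h := congrArg πh rel13
  simp only [map_mul, map_inv, πz₁₂, inv_one, one_mul] at h
  exact h

private lemma c23 : Commute v2 v3 := by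
  have h := congrArg πh rel15
  simp only [map_mul, map_inv, map_pow, πz₂₃, one_pow, one_mul] at h
  rw [mul_inv_eq_iff_eq_mul] at h
  exact h.symm

private lemma L3 : v1 * v3 = v3 * v1 * v2 := by
  have h := congrArg πh rel14
  simp only [map_mul, map_inv, map_pow, πz₁₂, one_mul] at h
  rw [mul_inv_eq_iff_eq_mul] at h
  replace h : v3 * v1 = v1 * v2 ^ 2 * v3 := h
  have key : v3 * v1 * v2 = v1 * v3 := by
    calc v3 * v1 * v2 = v1 * v2 ^ 2 * v3 * v2 := by rw [h]
      _ = v1 * v2 ^ 2 * (v3 * v2) := by rw [mul_assoc (v1 * v2 ^ 2)]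
      _ = v1 * v2 ^ 2 * (v2 * v3) := by rw [← c23.eq]
      _ = v1 * (v2 ^ 2 * v2) * v3 := by group
      _ = v1 * v2 ^ 3 * v3 := by rw [← pow_succ]
      _ = v1 * v3 := by rw [n2, mul_one]
  exact key.symm

private lemma L4 : ∀ k : ℕ, v1 ^ k * v3 = v3 * v1 ^ k * v2 ^ k := by
  intro k
  induction k with
  | zero => simp
  | succ k ih =>
    calc v1 ^ (k + 1) * v3 = v1 ^ k * (v1 * v3) := by rw [pow_succ, mul_assoc]
      _ = v1 ^ k * (v3 * v1 * v2) := by rw [L3]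
      _ = v1 ^ k * v3 * v1 * v2 := by group
      _ = v3 * v1 ^ k * v2 ^ k * v1 * v2 := by rw [ih]
      _ = v3 * v1 ^ k * (v2 ^ k * v1) * v2 := by group
      _ = v3 * v1 ^ k * (v1 * v2 ^ k) * v2 := by rw [(c21.pow_left k).eq]
      _ = v3 * v1 ^ (k + 1) * v2 ^ (k + 1) := by group

private lemma L5 : ∀ p k : ℕ, v1 ^ k * v3 ^ p = v3 ^ p * v1 ^ k * v2 ^ (k * p) := by
  intro p
  induction p with
  | zero => simp
  | succ p ih =>
    intro k
    rw [show k * (p + 1) = k + k * p by ring]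
    calc v1 ^ k * v3 ^ (p + 1) = v1 ^ k * v3 ^ p * v3 := by rw [pow_succ, ← mul_assoc]
      _ = v3 ^ p * v1 ^ k * v2 ^ (k * p) * v3 := by rw [ih]
      _ = v3 ^ p * v1 ^ k * (v2 ^ (k * p) * v3) := by group
      _ = v3 ^ p * v1 ^ k * (v3 * v2 ^ (k * p)) := by rw [(c23.pow_left (k * p)).eq]
      _ = v3 ^ p * (v1 ^ k * v3) * v2 ^ (k * p) := by group
      _ = v3 ^ p * (v3 * v1 ^ k * v2 ^ k) * v2 ^ (k * p) := by rw [L4]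
      _ = v3 ^ (p + 1) * v1 ^ k * (v2 ^ k * v2 ^ (k * p)) := by group
      _ = v3 ^ (p + 1) * v1 ^ k * v2 ^ (k + k * p) := by rw [← pow_add]

private def f3 (p qq r : ℕ) : H ⧸ N0 := v3 ^ p * v1 ^ qq * v2 ^ r

private lemma L6 (p qq r p' q' r' : ℕ) :
    f3 p qq r * f3 p' q' r' = f3 (p + p') (qq + q') (qq * p' + r + r') := by
  have c2x : ∀ m n : ℕ, v2 ^ m * v3 ^ n = v3 ^ n * v2 ^ m := fun m n => (c23.pow_pow m n).eq
  have c2y : ∀ m n : ℕ, v2 ^ m * v1 ^ n = v1 ^ n * v2 ^ m := fun m n => (c21.pow_pow m n).eq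
  calc (v3 ^ p * v1 ^ qq * v2 ^ r) * (v3 ^ p' * v1 ^ q' * v2 ^ r')
      = v3 ^ p * v1 ^ qq * (v2 ^ r * v3 ^ p') * v1 ^ q' * v2 ^ r' := by group
    _ = v3 ^ p * v1 ^ qq * (v3 ^ p' * v2 ^ r) * v1 ^ q' * v2 ^ r' := by rw [c2x]
    _ = v3 ^ p * (v1 ^ qq * v3 ^ p') * (v2 ^ r * v1 ^ q') * v2 ^ r' := by group
    _ = v3 ^ p * (v3 ^ p' * v1 ^ qq * v2 ^ (qq * p')) * (v1 ^ q' * v2 ^ r) * v2 ^ r' := by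
        rw [L5, c2y]
    _ = (v3 ^ p * v3 ^ p') * (v1 ^ qq * (v2 ^ (qq * p') * v1 ^ q')) * (v2 ^ r * v2 ^ r') := by
        group
    _ = (v3 ^ p * v3 ^ p') * (v1 ^ qq * (v1 ^ q' * v2 ^ (qq * p'))) * (v2 ^ r * v2 ^ r') := by
        rw [c2y]
    _ = (v3 ^ p * v3 ^ p') * (v1 ^ qq * v1 ^ q') * (v2 ^ (qq * p') * (v2 ^ r * v2 ^ r')) := by
        group
    _ = f3 (p + p') (qq + q') (qq * p' + (r + r')) := by
        rw [f3, ← pow_add, ← pow_add, ← pow_add, ← pow_add]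
    _ = f3 (p + p') (qq + q') (qq * p' + r + r') := by rw [← add_assoc]

private lemma f3_mod (p qq r : ℕ) : f3 p qq r = f3 (p % 3) (qq % 3) (r % 3) := by
  rw [f3, f3, pow_eq_pow_mod p n3, pow_eq_pow_mod qq n1, pow_eq_pow_mod r n2]

private def sfun : Heisenberg (ZMod 3) → H ⧸ N0 :=
  fun v => f3 v.x.val v.y.val (v.x * v.y - v.z).val

private lemma smul : ∀ v w : Heisenberg (ZMod 3), sfun (v * w) = sfun v * sfun w := by
  intro v w
  have e1 : ((v.x + w.x).val) % 3 = (v.x.val + w.x.val) % 3 := by rw [ZMod.val_add]; omega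
  have e2 : ((v.y + w.y).val) % 3 = (v.y.val + w.y.val) % 3 := by rw [ZMod.val_add]; omega
  have e3 : (((v.x + w.x) * (v.y + w.y) - (v.z + w.z + v.x * w.y)).val) % 3
      = (v.y.val * w.x.val + (v.x * v.y - v.z).val + (w.x * w.y - w.z).val) % 3 := by
    apply (ZMod.natCast_eq_natCast_iff' _ _ _).mp
    push_cast
    simp only [ZMod.natCast_val, ZMod.cast_id]
    ring
  show f3 ((v.x + w.x).val) ((v.y + w.y).val)
      (((v.x + w.x) * (v.y + w.y) - (v.z + w.z + v.x * w.y)).val)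
      = f3 v.x.val v.y.val ((v.x * v.y - v.z).val) * f3 w.x.val w.y.val ((w.x * w.y - w.z).val)
  rw [L6, f3_mod, e1, e2, e3, ← f3_mod]

private def s : Heisenberg (ZMod 3) →* H ⧸ N0 := MonoidHom.mk' sfun smul

private lemma Xh_pow (n : ℕ) : Xh ^ n = ⟨(n : ZMod 3), 0, 0⟩ := by
  induction n with
  | zero => rw [pow_zero]; ext <;> simp
  | succ n ih => rw [pow_succ, ih]; ext <;> simp [Xh] <;> push_cast <;> ring

private lemma Yh_pow (n : ℕ) : Yh ^ n = ⟨0, (n : ZMod 3), 0⟩ := by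
  induction n with
  | zero => rw [pow_zero]; ext <;> simp
  | succ n ih => rw [pow_succ, ih]; ext <;> simp [Yh] <;> push_cast <;> ring

private lemma Zh_pow (n : ℕ) : Zh ^ n = ⟨0, 0, 2 * (n : ZMod 3)⟩ := by
  induction n with
  | zero => rw [pow_zero]; ext <;> simp
  | succ n ih => rw [pow_succ, ih]; ext <;> simp [Zh] <;> push_cast <;> ring

private lemma qv1 : qbar v1 = Yh := PresentedGroup.toGroup.of hrelsHe
private lemma qv2 : qbar v2 = Zh := PresentedGroup.toGroup.of hrelsHe
private lemma qv3 : qbar v3 = Xh := PresentedGroup.toGroup.of hrelsHe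

private lemma hqsv : ∀ v : Heisenberg (ZMod 3), qbar (s v) = v := by
  intro v
  show qbar (f3 _ _ _) = v
  rw [f3, map_mul, map_mul, map_pow, map_pow, map_pow, qv1, qv2, qv3,
    Xh_pow, Yh_pow, Zh_pow]
  ext
  · show (v.x.val : ZMod 3) + 0 + 0 = v.x
    simp [ZMod.natCast_val, ZMod.cast_id]
  · show 0 + (v.y.val : ZMod 3) + 0 = v.y
    simp [ZMod.natCast_val, ZMod.cast_id]
  · show 0 + 0 + (v.x.val : ZMod 3) * (v.y.val : ZMod 3) + 2 * (((v.x * v.y - v.z).val : ZMod 3))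
        + ((v.x.val : ZMod 3) + 0) * 0 = v.z
    simp only [ZMod.natCast_val, ZMod.cast_id]
    linear_combination (v.x * v.y - v.z) * Md.three_eq_zero

private lemma hsq : s.comp qbar = MonoidHom.id (H ⧸ N0) := by
  apply QuotientGroup.monoidHom_ext
  apply PresentedGroup.ext
  intro i
  simp only [MonoidHom.comp_apply, QuotientGroup.mk'_apply, MonoidHom.id_apply]
  fin_cases i
  · show s (qbar v1) = v1
    rw [qv1]
    show f3 (0 : ZMod 3).val (1 : ZMod 3).val (((0 : ZMod 3) * 1 - 0).val) = v1
    rw [show (0 : ZMod 3).val = 0 from rfl, show (1 : ZMod 3).val = 1 from rfl,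
      show (((0 : ZMod 3) * 1 - 0)).val = 0 from rfl, f3]
    simp
  · show s (qbar v2) = v2
    rw [qv2]
    show f3 (0 : ZMod 3).val (0 : ZMod 3).val (((0 : ZMod 3) * 0 - 2).val) = v2
    rw [show (0 : ZMod 3).val = 0 from rfl, show (((0 : ZMod 3) * 0 - 2)).val = 1 from rfl, f3]
    simp
  · show s (qbar v3) = v3
    rw [qv3]
    show f3 (1 : ZMod 3).val (0 : ZMod 3).val (((1 : ZMod 3) * 0 - 0).val) = v3
    rw [show (0 : ZMod 3).val = 0 from rfl, show (1 : ZMod 3).val = 1 from rfl,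
      show (((1 : ZMod 3) * 0 - 0)).val = 0 from rfl, f3]
    simp
  · show s (qbar (πh z₁₂)) = πh z₁₂
    rw [πz₁₂, map_one, map_one]
  · show s (qbar (πh z₂₃)) = πh z₂₃
    rw [πz₂₃, map_one, map_one]

private noncomputable def equivQ : (H ⧸ N0) ≃* Heisenberg (ZMod 3) :=
  qbar.toMulEquiv s hsq (MonoidHom.ext hqsv)


theorem efficient_central_extension_of_heisenberg :
    Nonempty (A ≃* C3 × C3) ∧
    A ≤ Subgroup.center H ⊓ commutator H ∧
    Subgroup.normalClosure {z₁₂, z₂₃} = A ∧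
    Nonempty ((H ⧸ Subgroup.normalClosure {z₁₂, z₂₃}) ≃* Heisenberg (ZMod 3)) := by
  exact ⟨⟨equivA⟩, A_le_center_inf_commutator, ncl_eq_A, ⟨equivQ⟩⟩

end Stmt18
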